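/- Let λ, σ, τ > 0 be real, p, q complex with Re(p) ≥ 0, Re(q) ≥ 0, η₁, η₂, η₃ complex with Re(η₃) > Re(η₂) > 0, and n ∈ ℕ. Then for all complex z with |z| < 1, the n-th derivative of z ↦ F_{p,q}^{λ;σ,τ}(η₁, η₂; η₃; z) satisfies (d^n/dz^n) F_{p,q}^{λ;σ,τ}(η₁, η₂; η₃; z) = ((η₁)_n (η₂)_n / (η₃)_n) · F_{p,q}^{λ;σ,τ}(η₁+n, η₂+n; η₃+n; z). -/

import Mathlib

open MeasureTheory Set Complex

/-- The classical Mittag-Leffler function `E_λ(x) = Σ xⁿ / Γ(λn+1)`. -/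
noncomputable def mlE (lam : ℝ) (x : ℂ) : ℂ :=
  ∑' n : ℕ, x ^ n / Complex.Gamma (lam * n + 1)

/-- The extended beta function
`B_{p,q}^{λ;σ,τ}(η₁,η₂) = ∫₀¹ t^{η₁-1}(1-t)^{η₂-1} E_λ(-p/t^σ) E_λ(-q/(1-t)^τ) dt`. -/
noncomputable def extBeta (lam sig tau : ℝ) (p q e1 e2 : ℂ) : ℂ :=
  ∫ t in Ioo (0:ℝ) 1,
    (t : ℂ) ^ (e1 - 1) * (1 - (t : ℂ)) ^ (e2 - 1) *
      mlE lam (-p / (t : ℂ) ^ (sig : ℂ)) * mlE lam (-q / (1 - (t : ℂ)) ^ (tau : ℂ))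

/-- The extended Gauss hypergeometric function
`F_{p,q}^{λ;σ,τ}(η₁,η₂;η₃;z) = Σ (η₁)ₙ (B_{p,q}^{λ;σ,τ}(η₂+n,η₃-η₂)/B(η₂,η₃-η₂)) zⁿ/n!`. -/
noncomputable def extF (lam sig tau : ℝ) (p q e1 e2 e3 z : ℂ) : ℂ :=
  ∑' n : ℕ, (ascPochhammer ℂ n).eval e1 *
    (extBeta lam sig tau p q (e2 + n) (e3 - e2) / Complex.betaIntegral e2 (e3 - e2)) *
    z ^ n / (Nat.factorial n : ℂ)


section ExtFAux

open Filter Topology Polynomial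

lemma measurable_tsum_cx {g : ℕ → ℂ → ℂ} (hg : ∀ n, Measurable (g n)) :
    Measurable fun x => ∑' n, g n x := by
  classical
  set S : Set ℂ := {x | Summable fun n => g n x} with hSdef
  have hSm : MeasurableSet S := by
    have : S = ⋃ C : ℕ, ⋂ N : ℕ, {x | ∑ n ∈ Finset.range N, ‖g n x‖ ≤ C} := by
      ext x
      simp only [hSdef, mem_iUnion, mem_iInter, mem_setOf_eq]
      constructor
      · intro hx
        have hx' : Summable fun n => ‖g n x‖ := summable_norm_iff.mpr hx
        obtain ⟨C, hC⟩ := exists_nat_ge (∑' n, ‖g n x‖)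
        exact ⟨C, fun N =>
          le_trans (Summable.sum_le_tsum _ (fun _ _ => norm_nonneg _) hx') hC⟩
      · rintro ⟨C, hC⟩
        exact summable_norm_iff.mp
          (summable_of_sum_range_le (fun _ => norm_nonneg _) hC)
    rw [this]
    refine MeasurableSet.iUnion fun C => MeasurableSet.iInter fun N => ?_
    exact measurableSet_le (Finset.measurable_sum _ fun n _ => (hg n).norm)
      measurable_const
  have key : ∀ x, Tendsto (fun N => ∑ n ∈ Finset.range N, S.indicator (g n) x)
      atTop (𝓝 (∑' n, g n x)) := by
    intro x
    by_cases hx : x ∈ S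
    · have : ∀ n, S.indicator (g n) x = g n x := fun n => indicator_of_mem hx _
      simp only [this]
      exact (hx : Summable fun n => g n x).hasSum.tendsto_sum_nat
    · have : ∀ n, S.indicator (g n) x = 0 := fun n => indicator_of_notMem hx _
      simp only [this, Finset.sum_const_zero, tsum_eq_zero_of_not_summable hx]
      exact tendsto_const_nhds
  exact measurable_of_tendsto_metrizable
    (fun N => Finset.measurable_sum _ fun n _ => (hg n).indicator hSm)
    (tendsto_pi_nhds.mpr key)

lemma measurable_mlE (lam : ℝ) : Measurable (mlE lam) := by
  unfold mlE
  exact measurable_tsum_cx fun n => (measurable_id.pow_const n).div_const _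

lemma aesm_integrand (lam sig tau : ℝ) (p q w c : ℂ) :
    AEStronglyMeasurable
      (fun t : ℝ => (t : ℂ) ^ (w - 1) * (1 - (t : ℂ)) ^ (c - 1) *
        mlE lam (-p / (t : ℂ) ^ (sig : ℂ)) * mlE lam (-q / (1 - (t : ℂ)) ^ (tau : ℂ)))
      (volume.restrict (Ioo (0:ℝ) 1)) := by
  have hcont : ∀ u : ℂ, ContinuousOn (fun t : ℝ => (t : ℂ) ^ u) (Ioo (0:ℝ) 1) := by
    intro u t ht
    exact (Complex.continuous_ofReal.continuousAt.cpow continuousAt_const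
      (Or.inl (by simpa using ht.1))).continuousWithinAt
  have hcont' : ∀ u : ℂ, ContinuousOn (fun t : ℝ => (1 - (t : ℂ)) ^ u) (Ioo (0:ℝ) 1) := by
    intro u t ht
    refine (ContinuousAt.cpow ?_ continuousAt_const ?_).continuousWithinAt
    · exact (continuous_const.sub Complex.continuous_ofReal).continuousAt
    · left; simpa using ht.2
  have h1 : AEStronglyMeasurable (fun t : ℝ => (t : ℂ) ^ (w - 1))
      (volume.restrict (Ioo (0:ℝ) 1)) :=
    (hcont (w - 1)).aestronglyMeasurable measurableSet_Ioo
  have h2 : AEStronglyMeasurable (fun t : ℝ => (1 - (t : ℂ)) ^ (c - 1))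
      (volume.restrict (Ioo (0:ℝ) 1)) :=
    (hcont' (c - 1)).aestronglyMeasurable measurableSet_Ioo
  have h3 : AEStronglyMeasurable (fun t : ℝ => mlE lam (-p / (t : ℂ) ^ (sig : ℂ)))
      (volume.restrict (Ioo (0:ℝ) 1)) := by
    rw [aestronglyMeasurable_iff_aemeasurable]
    exact (measurable_mlE lam).comp_aemeasurable
      (aemeasurable_const.div ((hcont (sig : ℂ)).aemeasurable measurableSet_Ioo))
  have h4 : AEStronglyMeasurable (fun t : ℝ => mlE lam (-q / (1 - (t : ℂ)) ^ (tau : ℂ)))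
      (volume.restrict (Ioo (0:ℝ) 1)) := by
    rw [aestronglyMeasurable_iff_aemeasurable]
    exact (measurable_mlE lam).comp_aemeasurable
      (aemeasurable_const.div ((hcont' (tau : ℂ)).aemeasurable measurableSet_Ioo))
  exact ((h1.mul h2).mul h3).mul h4

lemma extBeta_bound (lam sig tau : ℝ) (p q b c : ℂ) :
    ∃ C : ℝ, 0 ≤ C ∧ ∀ m : ℕ, ‖extBeta lam sig tau p q (b + m) c‖ ≤ C := by
  classical
  set F : ℕ → ℝ → ℂ := fun m t =>
    (t : ℂ) ^ (b + m - 1) * (1 - (t : ℂ)) ^ (c - 1) *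
      mlE lam (-p / (t : ℂ) ^ (sig : ℂ)) * mlE lam (-q / (1 - (t : ℂ)) ^ (tau : ℂ)) with hF
  have hFeq : ∀ m : ℕ, extBeta lam sig tau p q (b + m) c = ∫ t in Ioo (0:ℝ) 1, F m t :=
    fun (m : ℕ) => rfl
  have hmeas : ∀ m, AEStronglyMeasurable (F m) (volume.restrict (Ioo (0:ℝ) 1)) :=
    fun m => aesm_integrand lam sig tau p q (b + m) c
  by_cases hint : ∃ m₀, IntegrableOn (F m₀) (Ioo (0:ℝ) 1)
  · obtain ⟨m₀, hm₀⟩ := hint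
    set I : ℝ := ∫ t in Ioo (0:ℝ) 1, ‖F m₀ t‖ with hI
    set S0 : ℝ := ∑ m ∈ Finset.range m₀, ‖extBeta lam sig tau p q (b + m) c‖ with hS0h
    have hInn : 0 ≤ I := integral_nonneg fun t => norm_nonneg _
    have hS0nn : 0 ≤ S0 := Finset.sum_nonneg fun _ _ => norm_nonneg _
    refine ⟨I + S0, by linarith, fun m => ?_⟩
    rcases lt_or_ge m m₀ with h | h
    · have : ‖extBeta lam sig tau p q (b + m) c‖ ≤ S0 := by
        rw [hS0h]
        exact Finset.single_le_sum (f := fun i : ℕ => ‖extBeta lam sig tau p q (b + i) c‖) (fun i _ => norm_nonneg _) (Finset.mem_range.mpr h)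
      linarith
    · have hle : ∀ t ∈ Ioo (0:ℝ) 1, ‖F m t‖ ≤ ‖F m₀ t‖ := by
        intro t ht
        have h1 : ‖(t : ℂ) ^ (b + m - 1)‖ ≤ ‖(t : ℂ) ^ (b + m₀ - 1)‖ := by
          rw [Complex.norm_cpow_eq_rpow_re_of_pos ht.1, Complex.norm_cpow_eq_rpow_re_of_pos ht.1]
          apply Real.rpow_le_rpow_of_exponent_ge ht.1 ht.2.le
          simp only [Complex.sub_re, Complex.add_re, Complex.natCast_re, Complex.one_re]
          have : (m₀ : ℝ) ≤ m := Nat.cast_le.mpr h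
          linarith
        calc ‖F m t‖ = ‖(t : ℂ) ^ (b + m - 1)‖ *
              (‖(1 - (t : ℂ)) ^ (c - 1)‖ * ‖mlE lam (-p / (t : ℂ) ^ (sig : ℂ))‖ *
               ‖mlE lam (-q / (1 - (t : ℂ)) ^ (tau : ℂ))‖) := by
                simp [hF, norm_mul]; ring
          _ ≤ ‖(t : ℂ) ^ (b + m₀ - 1)‖ *
              (‖(1 - (t : ℂ)) ^ (c - 1)‖ * ‖mlE lam (-p / (t : ℂ) ^ (sig : ℂ))‖ *
               ‖mlE lam (-q / (1 - (t : ℂ)) ^ (tau : ℂ))‖) := by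
                apply mul_le_mul_of_nonneg_right h1
                positivity
          _ = ‖F m₀ t‖ := by simp [hF, norm_mul]; ring
      have hle' : ∀ᵐ t ∂(volume.restrict (Ioo (0:ℝ) 1)), ‖F m t‖ ≤ ‖F m₀ t‖ :=
        (ae_restrict_mem measurableSet_Ioo).mono hle
      have hi : IntegrableOn (F m) (Ioo (0:ℝ) 1) :=
        Integrable.mono hm₀ (hmeas m) hle'
      have : ‖extBeta lam sig tau p q (b + m) c‖ ≤ I := by
        rw [hFeq m]
        refine le_trans (norm_integral_le_integral_norm _) ?_
        exact setIntegral_mono_on hi.norm hm₀.norm measurableSet_Ioo hle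
      linarith
  · push_neg at hint
    refine ⟨0, le_refl _, fun m => ?_⟩
    rw [hFeq m, integral_undef (hint m)]
    simp

lemma cx_ne_zero_of_re_pos {x : ℂ} (hx : 0 < x.re) : x ≠ 0 := by
  intro h; rw [h] at hx; simp at hx

lemma poch_ne_zero {x : ℂ} (hx : 0 < x.re) (n : ℕ) :
    (ascPochhammer ℂ n).eval x ≠ 0 := by
  induction n with
  | zero => simp [ascPochhammer_zero]
  | succ n ih =>
    rw [ascPochhammer_succ_eval]
    refine mul_ne_zero ih (cx_ne_zero_of_re_pos ?_)
    simp only [Complex.add_re, Complex.natCast_re]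
    positivity

lemma poch_norm_le (a : ℂ) (n : ℕ) :
    ‖(ascPochhammer ℂ n).eval a‖ ≤ (ascPochhammer ℝ n).eval (‖a‖ + 1) := by
  induction n with
  | zero => simp [ascPochhammer_zero]
  | succ n ih =>
    rw [ascPochhammer_succ_eval, ascPochhammer_succ_eval, norm_mul]
    have h1 : ‖a + (n : ℂ)‖ ≤ ‖a‖ + 1 + n := by
      refine le_trans (norm_add_le _ _) ?_
      simp
    refine mul_le_mul ih h1 (norm_nonneg _) ?_
    have := ascPochhammer_pos n (‖a‖ + 1) (by positivity)
    linarith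

lemma tendsto_ratio_aux (x : ℝ) :
    Tendsto (fun n : ℕ => (x + n) / (1 + n)) atTop (𝓝 1) := by
  have h : Tendsto (fun n : ℕ => (x - 1) * (1 / ((n : ℝ) + 1)) + 1) atTop (𝓝 ((x-1) * 0 + 1)) :=
    ((tendsto_one_div_add_atTop_nhds_zero_nat).const_mul (x-1)).add tendsto_const_nhds
  simp only [mul_zero, zero_add] at h
  refine h.congr fun n => ?_
  have hn : ((n : ℝ) + 1) ≠ 0 := by positivity
  rw [mul_one_div, div_add' _ _ _ hn, div_eq_div_iff hn (by positivity : (1:ℝ) + (n:ℝ) ≠ 0)]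
  ring

lemma summable_poch_geom {R r : ℝ} (hR : 1 ≤ R) (hr0 : 0 < r) (hr1 : r < 1) :
    Summable (fun n : ℕ => (ascPochhammer ℝ (n+1)).eval R / (Nat.factorial n) * r ^ n) := by
  set f : ℕ → ℝ := fun n => (ascPochhammer ℝ (n+1)).eval R / (Nat.factorial n) * r ^ n with hf
  have hpos : ∀ n, 0 < f n := by
    intro n
    have := ascPochhammer_pos (n+1) R (by linarith)
    have h2 : (0:ℝ) < Nat.factorial n := by positivity
    positivity
  apply summable_of_ratio_test_tendsto_lt_one hr1
    (Eventually.of_forall fun n => (hpos n).ne')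
  have key : ∀ n : ℕ, ‖f (n+1)‖ / ‖f n‖ = ((R + 1) + n) / (1 + n) * r := by
    intro n
    rw [Real.norm_eq_abs, Real.norm_eq_abs, abs_of_pos (hpos _), abs_of_pos (hpos _), hf]
    have e1 : (ascPochhammer ℝ (n+2)).eval R
        = (ascPochhammer ℝ (n+1)).eval R * (R + (n+1)) := by
      have := ascPochhammer_succ_eval (S := ℝ) (n+1) R
      simpa using this
    have e2 : (Nat.factorial (n+1) : ℝ) = (Nat.factorial n) * (n+1) := by
      rw [Nat.factorial_succ]; push_cast; ring
    have hP : (0:ℝ) < (ascPochhammer ℝ (n+1)).eval R := ascPochhammer_pos _ _ (by linarith)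
    have hfac : (0:ℝ) < (Nat.factorial n : ℝ) := by positivity
    have hrn : (0:ℝ) < r ^ n := by positivity
    simp only []
    rw [e1, e2]
    field_simp
    ring
  have : Tendsto (fun n : ℕ => ((R + 1) + n) / (1 + n) * r) atTop (𝓝 (1 * r)) :=
    (tendsto_ratio_aux (R+1)).mul_const r
  rw [one_mul] at this
  exact this.congr fun n => (key n).symm

lemma beta_shift {b c : ℂ} (hb : 0 < b.re) (hbc : b.re < c.re) :
    c * Complex.betaIntegral (b+1) (c-b) = b * Complex.betaIntegral b (c-b)
    ∧ Complex.betaIntegral b (c-b) ≠ 0 ∧ Complex.betaIntegral (b+1) (c-b) ≠ 0 := by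
  have hcb : 0 < (c - b).re := by simp [Complex.sub_re]; linarith
  have hc : 0 < c.re := by linarith
  have hb1 : 0 < (b + 1).re := by simp [Complex.add_re]; linarith
  have hΓb := Complex.Gamma_ne_zero_of_re_pos hb
  have hΓc := Complex.Gamma_ne_zero_of_re_pos hc
  have hΓcb := Complex.Gamma_ne_zero_of_re_pos hcb
  have h1 : Complex.Gamma b * Complex.Gamma (c-b)
      = Complex.Gamma c * Complex.betaIntegral b (c-b) := by
    have := Complex.Gamma_mul_Gamma_eq_betaIntegral hb hcb
    rwa [show b + (c - b) = c by ring] at this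
  have h2 : Complex.Gamma (b+1) * Complex.Gamma (c-b)
      = Complex.Gamma (c+1) * Complex.betaIntegral (b+1) (c-b) := by
    have := Complex.Gamma_mul_Gamma_eq_betaIntegral hb1 hcb
    rwa [show b + 1 + (c - b) = c + 1 by ring] at this
  rw [Complex.Gamma_add_one b (cx_ne_zero_of_re_pos hb),
      Complex.Gamma_add_one c (cx_ne_zero_of_re_pos hc)] at h2
  have hBne : Complex.betaIntegral b (c-b) ≠ 0 := by
    intro h
    rw [h, mul_zero] at h1
    exact mul_ne_zero hΓb hΓcb h1
  have hB'ne : Complex.betaIntegral (b+1) (c-b) ≠ 0 := by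
    intro h
    rw [h, mul_zero] at h2
    exact mul_ne_zero (mul_ne_zero (cx_ne_zero_of_re_pos hb) hΓb) hΓcb h2
  refine ⟨?_, hBne, hB'ne⟩
  have h3 : b * (Complex.Gamma c * Complex.betaIntegral b (c-b))
      = c * Complex.Gamma c * Complex.betaIntegral (b+1) (c-b) := by
    rw [← h1]; linear_combination h2
  apply mul_left_cancel₀ hΓc
  linear_combination -h3

lemma extF_hasDerivAt (lam sig tau : ℝ) (p q a b c : ℂ) (hb : 0 < b.re)
    (hbc : b.re < c.re) {z : ℂ} (hz : ‖z‖ < 1) :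
    HasDerivAt (fun w => extF lam sig tau p q a b c w)
      (a * b / c * extF lam sig tau p q (a+1) (b+1) (c+1) z) z := by
  obtain ⟨hid, hBne, hB'ne⟩ := beta_shift hb hbc
  obtain ⟨C, hC0, hC⟩ := extBeta_bound lam sig tau p q b (c - b)
  have hb0 : b ≠ 0 := cx_ne_zero_of_re_pos hb
  have hc0 : c ≠ 0 := cx_ne_zero_of_re_pos (by linarith : 0 < c.re)
  set B : ℂ := Complex.betaIntegral b (c-b) with hBdef
  set co : ℕ → ℂ := fun n => (ascPochhammer ℂ n).eval a *
      (extBeta lam sig tau p q (b + n) (c - b) / B) / (Nat.factorial n : ℂ) with hco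
  set K : ℝ := C / ‖B‖ with hK
  have hBpos : 0 < ‖B‖ := norm_pos_iff.mpr hBne
  have hK0 : 0 ≤ K := div_nonneg hC0 (norm_nonneg _)
  set R : ℝ := ‖a‖ + 1 with hR
  have hR1 : 1 ≤ R := by rw [hR]; linarith [norm_nonneg a]
  have hPpos : ∀ n : ℕ, 0 < (ascPochhammer ℝ n).eval R :=
    fun n => ascPochhammer_pos n R (by linarith)
  have hco_bound : ∀ n, ‖co n‖ ≤ K * ((ascPochhammer ℝ n).eval R / (Nat.factorial n)) := by
    intro n
    have hfac : (0:ℝ) < (Nat.factorial n : ℝ) := by positivity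
    have h1 : ‖(ascPochhammer ℂ n).eval a‖ ≤ (ascPochhammer ℝ n).eval R := poch_norm_le a n
    have h2 : ‖extBeta lam sig tau p q (b + n) (c - b)‖ / ‖B‖ ≤ K := by
      rw [hK]; gcongr
      exact hC n
    calc ‖co n‖ = ‖(ascPochhammer ℂ n).eval a‖ *
          (‖extBeta lam sig tau p q (b + n) (c - b)‖ / ‖B‖) / (Nat.factorial n : ℝ) := by
          rw [hco]; simp only [norm_div, norm_mul, Complex.norm_natCast]
      _ ≤ (ascPochhammer ℝ n).eval R * K / (Nat.factorial n : ℝ) := by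
          gcongr
          exact (hPpos n).le
      _ = K * ((ascPochhammer ℝ n).eval R / (Nat.factorial n)) := by ring
  set r : ℝ := (1 + ‖z‖) / 2 with hr
  have hr0 : 0 < r := by rw [hr]; have := norm_nonneg z; linarith
  have hr1 : r < 1 := by rw [hr]; linarith
  have hzr : ‖z‖ < r := by rw [hr]; linarith
  set v : ℕ → ℝ := fun n => (ascPochhammer ℝ (n+1)).eval R / (Nat.factorial n) * r ^ n with hv
  have hvsum : Summable v := summable_poch_geom hR1 hr0 hr1
  set u : ℕ → ℝ := fun n => (K / r) * v n with hu
  have husum : Summable u := hvsum.mul_left _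
  have huval : ∀ n : ℕ, u n
      = (K / r) * ((ascPochhammer ℝ n).eval R * (R + n) / (Nat.factorial n) * r ^ n) := by
    intro n
    rw [hu, hv]
    simp only []
    rw [ascPochhammer_succ_eval]
  have hrpow : ∀ n : ℕ, r ^ (n - 1) ≤ r ^ n / r := by
    intro n
    cases n with
    | zero => simpa using (one_le_one_div hr0 hr1.le)
    | succ n => rw [pow_succ, mul_div_assoc, div_self hr0.ne', mul_one]; simp
  have hbound : ∀ (n : ℕ) (y : ℂ), ‖y‖ ≤ r →
      ‖co n * ((n : ℂ) * y ^ (n - 1))‖ ≤ u n := by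
    intro n y hy
    have hfac : (0:ℝ) < (Nat.factorial n : ℝ) := by positivity
    calc ‖co n * ((n : ℂ) * y ^ (n - 1))‖
        = ‖co n‖ * ((n : ℝ) * ‖y‖ ^ (n - 1)) := by
          rw [norm_mul, norm_mul, norm_pow, Complex.norm_natCast]
      _ ≤ (K * ((ascPochhammer ℝ n).eval R / (Nat.factorial n))) * ((R + n) * (r ^ n / r)) := by
          have hyr : ‖y‖ ^ (n-1) ≤ r ^ (n-1) := pow_le_pow_left₀ (norm_nonneg _) hy _
          have h5 : (n : ℝ) * ‖y‖ ^ (n - 1) ≤ (R + n) * (r ^ n / r) := by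
            have h6 : (n : ℝ) ≤ R + n := by linarith
            exact mul_le_mul h6 (hyr.trans (hrpow n)) (by positivity) (by positivity)
          exact mul_le_mul (hco_bound n) h5 (by positivity)
            (mul_nonneg hK0 (div_nonneg (hPpos n).le hfac.le))
      _ = u n := by
          rw [huval n]
          field_simp
  have hbound2 : ∀ n : ℕ, ‖co n * z ^ n‖ ≤ u n := by
    intro n
    have hfac : (0:ℝ) < (Nat.factorial n : ℝ) := by positivity
    calc ‖co n * z ^ n‖ = ‖co n‖ * ‖z‖ ^ n := by simp [norm_mul, norm_pow]
      _ ≤ (K * ((ascPochhammer ℝ n).eval R / (Nat.factorial n))) * r ^ n := by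
          have : ‖z‖ ≤ r := by exact hzr.le
          exact mul_le_mul (hco_bound n) (pow_le_pow_left₀ (norm_nonneg _) this n)
            (by positivity) (mul_nonneg hK0 (div_nonneg (hPpos n).le hfac.le))
      _ ≤ u n := by
          rw [huval n]
          have h7 : K * ((ascPochhammer ℝ n).eval R / (Nat.factorial n)) * r ^ n
              = (K / r) * ((ascPochhammer ℝ n).eval R * r / (Nat.factorial n) * r ^ n) := by
            field_simp
          rw [h7]
          have h8 : r ≤ R + n := by
            have hn0 : (0:ℝ) ≤ (n : ℝ) := Nat.cast_nonneg n
            linarith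
          apply mul_le_mul_of_nonneg_left _ (div_nonneg hK0 hr0.le)
          apply mul_le_mul_of_nonneg_right _ (pow_nonneg hr0.le n)
          exact (div_le_div_iff_of_pos_right hfac).mpr (mul_le_mul_of_nonneg_left h8 (hPpos n).le)
  have hball : z ∈ Metric.ball (0:ℂ) r := by
    rw [Metric.mem_ball, dist_zero_right]; exact hzr
  have hder := hasDerivAt_tsum_of_isPreconnected husum Metric.isOpen_ball
    (convex_ball (0:ℂ) r).isPreconnected
    (g := fun n w => co n * w ^ n) (g' := fun n w => co n * ((n : ℂ) * w ^ (n - 1)))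
    (fun n y _ => (hasDerivAt_pow n y).const_mul (co n))
    (fun n y hy => by
      refine hbound n y ?_
      rw [Metric.mem_ball, dist_zero_right] at hy
      exact hy.le)
    hball
    (Summable.of_norm_bounded husum hbound2)
    hball
  have hfun : (fun w => extF lam sig tau p q a b c w) = fun w => ∑' n, co n * w ^ n := by
    funext w
    rw [extF]
    exact tsum_congr fun n => by rw [hco]; ring
  have hsum' : Summable (fun n => co n * ((n : ℂ) * z ^ (n - 1))) :=
    Summable.of_norm_bounded husum fun n =>
      hbound n z (by exact hzr.le)
  have hB'eq : Complex.betaIntegral (b+1) (c-b) = b * B / c := by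
    rw [eq_div_iff hc0]
    linear_combination hid
  have hval : (∑' n : ℕ, co n * ((n : ℂ) * z ^ (n - 1)))
      = a * b / c * extF lam sig tau p q (a+1) (b+1) (c+1) z := by
    rw [Summable.tsum_eq_zero_add hsum']
    have h0 : co 0 * ((0 : ℕ) * z ^ (0 - 1)) = 0 := by simp
    rw [h0, zero_add]
    have hterm : ∀ n : ℕ, co (n+1) * (((n+1 : ℕ) : ℂ) * z ^ ((n+1) - 1))
        = a * b / c * ((ascPochhammer ℂ n).eval (a+1) *
          (extBeta lam sig tau p q (b + 1 + n) (c + 1 - (b + 1)) /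
            Complex.betaIntegral (b+1) (c + 1 - (b+1))) * z ^ n / (Nat.factorial n : ℂ)) := by
      intro n
      have e1 : c + 1 - (b + 1) = c - b := by ring
      have e2 : b + 1 + (n : ℂ) = b + ((n+1 : ℕ) : ℂ) := by push_cast; ring
      have e3 : (ascPochhammer ℂ (n+1)).eval a = a * (ascPochhammer ℂ n).eval (a+1) := by
        rw [ascPochhammer_succ_left]
        simp [Polynomial.eval_mul, Polynomial.eval_comp]
      have e4 : ((n+1).factorial : ℂ) = ((n+1 : ℕ) : ℂ) * (n.factorial : ℂ) := by
        rw [Nat.factorial_succ]; push_cast; ring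
      rw [e1, e2, hB'eq, hco]
      simp only [Nat.add_sub_cancel]
      rw [e3, e4]
      have hn1 : ((n+1 : ℕ) : ℂ) ≠ 0 := Nat.cast_ne_zero.mpr (Nat.succ_ne_zero n)
      have hfn : ((n.factorial : ℕ) : ℂ) ≠ 0 := Nat.cast_ne_zero.mpr (Nat.factorial_ne_zero n)
      generalize ((n+1 : ℕ) : ℂ) = N at hn1 ⊢
      generalize ((n.factorial : ℕ) : ℂ) = Fc at hfn ⊢
      generalize extBeta lam sig tau p q (b + N) (c - b) = E
      field_simp
    rw [tsum_congr hterm, tsum_mul_left]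
    rw [extF]
  rw [hfun, ← hval]
  exact hder

end ExtFAux

open Filter Topology Polynomial in
theorem extF_iterated_deriv (lam sig tau : ℝ) (hlam : 0 < lam) (hsig : 0 < sig)
    (htau : 0 < tau) (p q e1 e2 e3 : ℂ) (hp : 0 ≤ p.re) (hq : 0 ≤ q.re)
    (he2 : 0 < e2.re) (he23 : e2.re < e3.re) (n : ℕ) :
    ∀ z : ℂ, ‖z‖ < 1 →
      iteratedDeriv n (fun w => extF lam sig tau p q e1 e2 e3 w) z
        = (ascPochhammer ℂ n).eval e1 * (ascPochhammer ℂ n).eval e2 /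
            (ascPochhammer ℂ n).eval e3 *
          extF lam sig tau p q (e1 + n) (e2 + n) (e3 + n) z := by
  induction n with
  | zero =>
    intro z hz
    simp [iteratedDeriv_zero, ascPochhammer_zero]
  | succ n ih =>
    intro z hz
    rw [iteratedDeriv_succ]
    have hopen : IsOpen {w : ℂ | ‖w‖ < 1} :=
      isOpen_lt continuous_norm continuous_const
    have hev : iteratedDeriv n (fun w => extF lam sig tau p q e1 e2 e3 w)
        =ᶠ[𝓝 z] fun w => (ascPochhammer ℂ n).eval e1 * (ascPochhammer ℂ n).eval e2 /
            (ascPochhammer ℂ n).eval e3 *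
          extF lam sig tau p q (e1 + n) (e2 + n) (e3 + n) w := by
      filter_upwards [hopen.mem_nhds hz] with w hw using ih w hw
    rw [hev.deriv_eq]
    have hb : 0 < (e2 + (n : ℂ)).re := by
      simp only [Complex.add_re, Complex.natCast_re]
      positivity
    have hbc : (e2 + (n : ℂ)).re < (e3 + (n : ℂ)).re := by
      simp only [Complex.add_re, Complex.natCast_re]
      linarith
    have hkey := extF_hasDerivAt lam sig tau p q (e1 + n) (e2 + n) (e3 + n) hb hbc hz
    have hd := (hkey.const_mul ((ascPochhammer ℂ n).eval e1 * (ascPochhammer ℂ n).eval e2 /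
            (ascPochhammer ℂ n).eval e3)).deriv
    rw [hd]
    have c1 : e1 + (n : ℂ) + 1 = e1 + ((n + 1 : ℕ) : ℂ) := by push_cast; ring
    have c2 : e2 + (n : ℂ) + 1 = e2 + ((n + 1 : ℕ) : ℂ) := by push_cast; ring
    have c3 : e3 + (n : ℂ) + 1 = e3 + ((n + 1 : ℕ) : ℂ) := by push_cast; ring
    rw [c1, c2, c3]
    rw [ascPochhammer_succ_eval, ascPochhammer_succ_eval, ascPochhammer_succ_eval]
    have h3 : (ascPochhammer ℂ n).eval e3 ≠ 0 := poch_ne_zero (by linarith) n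
    have h4 : e3 + (n : ℂ) ≠ 0 := cx_ne_zero_of_re_pos (by
      simp only [Complex.add_re, Complex.natCast_re]
      have : (0:ℝ) ≤ (n:ℝ) := Nat.cast_nonneg n
      linarith)
    field_simp
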